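/- arXiv:2309.16945 — 3 statements merged into one kernel-verified Lean document; each statement's English description precedes it below -/
import Mathlib

section
/- Let b₀, b₁ : [0,∞) → ℝ be continuously differentiable, γ₁ a class-K function, and suppose b₁(t) = b₀'(t) + γ₁(b₀(t)) for all t ≥ 0. If b₁(t) ≥ 0 for all t ≥ 0 and b₀(0) ≥ 0, then b₀(t) ≥ 0 for all t ≥ 0. -/
theorem stmt_11 (b0 b0' b1 : ℝ → ℝ) (γ1 : ℝ → ℝ)
    (hderiv : ∀ t ≥ (0:ℝ), HasDerivAt b0 (b0' t) t)
    (hcont : ContinuousOn b0' (Set.Ici 0))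
    (hγcont : Continuous γ1) (hγmono : StrictMono γ1) (hγ0 : γ1 0 = 0)
    (hrec : ∀ t ≥ (0:ℝ), b1 t = b0' t + γ1 (b0 t))
    (hb1 : ∀ t ≥ (0:ℝ), b1 t ≥ 0)
    (h0 : b0 0 ≥ 0) :
    ∀ t ≥ (0:ℝ), b0 t ≥ 0 := by
  by_contra h
  push_neg at h
  obtain ⟨t, ht0, htneg⟩ := h
  -- b0 is continuous on Ici 0
  have hb0cont : ContinuousOn b0 (Set.Ici 0) := fun x hx =>
    (hderiv x hx).continuousAt.continuousWithinAt
  set S : Set ℝ := Set.Icc 0 t ∩ b0 ⁻¹' Set.Ici 0 with hS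
  have h0S : (0:ℝ) ∈ S := ⟨⟨le_refl 0, ht0⟩, h0⟩
  have hSne : S.Nonempty := ⟨0, h0S⟩
  have hSbdd : BddAbove S := ⟨t, fun x hx => hx.1.2⟩
  have hSclosed : IsClosed S := by
    apply (hb0cont.mono (fun x hx => hx.1)).preimage_isClosed_of_isClosed
      isClosed_Icc isClosed_Ici
  set T := sSup S with hT
  have hTS : T ∈ S := hSclosed.csSup_mem hSne hSbdd
  have hT0 : 0 ≤ T := hTS.1.1
  have hTle : T ≤ t := hTS.1.2
  have hTlt : T < t := by
    rcases hTle.lt_or_eq with h' | h'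
    · exact h'
    · exfalso
      have h2 := hTS.2
      simp only [Set.mem_preimage, Set.mem_Ici] at h2
      rw [h'] at h2
      linarith
  -- On (T, t), b0 < 0
  have hneg : ∀ x ∈ Set.Ioo T t, b0 x < 0 := by
    intro x hx
    by_contra hc
    push_neg at hc
    have hxS : x ∈ S := ⟨⟨le_trans hT0 hx.1.le, hx.2.le⟩, hc⟩
    exact absurd (le_csSup hSbdd hxS) (not_le.mpr hx.1)
  -- deriv positive on interior
  have hmono : StrictMonoOn b0 (Set.Icc T t) := by
    apply StrictMonoOn.mono (s := Set.Icc T t) ?_ (le_refl _)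
    apply strictMonoOn_of_deriv_pos (convex_Icc T t)
    · exact hb0cont.mono (fun x hx => le_trans hT0 hx.1)
    · intro x hx
      rw [interior_Icc] at hx
      have hx0 : (0:ℝ) ≤ x := le_trans hT0 hx.1.le
      rw [(hderiv x hx0).deriv]
      have h1 := hb1 x hx0
      have h2 := hrec x hx0
      have h3 : γ1 (b0 x) < 0 := hγ0 ▸ hγmono (hneg x hx)
      linarith
  have := hmono ⟨le_refl T, hTle⟩ ⟨hTlt.le, le_refl t⟩ hTlt
  have := hTS.2
  simp only [Set.mem_preimage, Set.mem_Ici] at this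
  linarith
end

section
/- Let b₀, b₁, ..., b_m : [0,∞) → ℝ be continuously differentiable functions and γ₁,...,γ_m class-K functions with b_i(t) = b_{i-1}'(t) + γ_i(b_{i-1}(t)) for all i ∈ {1,...,m} and t ≥ 0. If b_m(t) ≥ 0 for all t ≥ 0 and b_i(0) ≥ 0 for all i ∈ {0,...,m-1}, then b_i(t) ≥ 0 for every i ∈ {0,...,m} and all t ≥ 0. -/
lemma key_aux (b b' g : ℝ → ℝ)
    (hd : ∀ t ≥ (0:ℝ), HasDerivAt b (b' t) t)
    (hmono : StrictMono g) (hg0 : g 0 = 0)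
    (hge : ∀ t ≥ (0:ℝ), 0 ≤ b' t + g (b t))
    (h0 : 0 ≤ b 0) : ∀ t ≥ (0:ℝ), 0 ≤ b t := by
  intro t₁ ht₁
  by_contra hneg
  push_neg at hneg
  have hcont : ContinuousOn b (Set.Ici 0) :=
    fun x hx => ((hd x hx).continuousAt).continuousWithinAt
  have ht₁pos : 0 < t₁ := by
    rcases lt_or_eq_of_le ht₁ with h | h
    · exact h
    · rw [← h] at hneg; linarith
  set S := Set.Icc (0:ℝ) t₁ ∩ b ⁻¹' Set.Ici 0 with hSdef
  have hS0 : (0:ℝ) ∈ S := ⟨⟨le_refl _, le_of_lt ht₁pos⟩, h0⟩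
  have hSbdd : BddAbove S := ⟨t₁, fun x hx => hx.1.2⟩
  have hclosed : IsClosed S :=
    (hcont.mono (fun x hx => hx.1)).preimage_isClosed_of_isClosed
      isClosed_Icc isClosed_Ici
  have ht₀mem : sSup S ∈ S := hclosed.csSup_mem ⟨0, hS0⟩ hSbdd
  set t₀ := sSup S with ht₀def
  have ht₀0 : 0 ≤ t₀ := ht₀mem.1.1
  have ht₀le : t₀ ≤ t₁ := ht₀mem.1.2
  have ht₀b : 0 ≤ b t₀ := ht₀mem.2
  have ht₀lt : t₀ < t₁ := by
    rcases lt_or_eq_of_le ht₀le with h | h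
    · exact h
    · rw [h] at ht₀b; linarith
  have hbetween : ∀ t ∈ Set.Ioc t₀ t₁, b t < 0 := by
    intro t ht
    by_contra hb
    push_neg at hb
    have : t ∈ S := ⟨⟨le_trans ht₀0 (le_of_lt ht.1), ht.2⟩, hb⟩
    exact absurd (le_csSup hSbdd this) (not_le.mpr ht.1)
  have hsm : StrictMonoOn b (Set.Icc t₀ t₁) := by
    apply strictMonoOn_of_deriv_pos (convex_Icc _ _)
    · exact hcont.mono (fun x hx => le_trans ht₀0 hx.1)
    · intro x hx
      rw [interior_Icc] at hx
      have hx0 : (0:ℝ) ≤ x := le_trans ht₀0 (le_of_lt hx.1)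
      rw [(hd x hx0).deriv]
      have hbx : b x < 0 := hbetween x ⟨hx.1, le_of_lt hx.2⟩
      have : g (b x) < 0 := hg0 ▸ hmono hbx
      have := hge x hx0
      linarith
  have := hsm (Set.left_mem_Icc.mpr ht₀le) (Set.right_mem_Icc.mpr ht₀le) ht₀lt
  linarith

theorem stmt_12 (m : ℕ) (b b' : ℕ → ℝ → ℝ) (γ : ℕ → ℝ → ℝ)
    (hderiv : ∀ i ≤ m, ∀ t ≥ (0:ℝ), HasDerivAt (b i) (b' i t) t)
    (hcont : ∀ i ≤ m, ContinuousOn (b' i) (Set.Ici 0))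
    (hγ : ∀ i, 1 ≤ i → i ≤ m →
      Continuous (γ i) ∧ StrictMono (γ i) ∧ γ i 0 = 0)
    (hrec : ∀ i, 1 ≤ i → i ≤ m → ∀ t ≥ (0:ℝ),
      b i t = b' (i - 1) t + γ i (b (i - 1) t))
    (hbm : ∀ t ≥ (0:ℝ), b m t ≥ 0)
    (h0 : ∀ i < m, b i 0 ≥ 0) :
    ∀ i ≤ m, ∀ t ≥ (0:ℝ), b i t ≥ 0 := by
  have main : ∀ j, j ≤ m → ∀ t ≥ (0:ℝ), b (m - j) t ≥ 0 := by
    intro j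
    induction j with
    | zero => simpa using hbm
    | succ k ih =>
      intro hk t ht
      have hkm : k ≤ m := le_of_lt (Nat.lt_of_succ_le hk)
      set i := m - (k + 1) with hi
      have him : i < m := Nat.sub_lt (Nat.lt_of_lt_of_le (Nat.succ_pos k) hk) (Nat.succ_pos k)
      have hsucc : i + 1 = m - k := by omega
      have hi1m : i + 1 ≤ m := by omega
      have hprev : ∀ s ≥ (0:ℝ), b (i + 1) s ≥ 0 := by
        intro s hs
        rw [hsucc]
        exact ih hkm s hs
      obtain ⟨-, hmono, hg0⟩ := hγ (i + 1) (Nat.succ_le_succ (Nat.zero_le i)) hi1m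
      have hge : ∀ s ≥ (0:ℝ), 0 ≤ b' i s + γ (i + 1) (b i s) := by
        intro s hs
        have := hrec (i + 1) (Nat.succ_le_succ (Nat.zero_le i)) hi1m s hs
        simp only [Nat.add_sub_cancel] at this
        rw [← this]
        exact hprev s hs
      exact key_aux (b i) (b' i) (γ (i + 1))
        (hderiv i (le_of_lt him)) hmono hg0 hge (h0 i him) t ht
  intro i hi t ht
  have : m - (m - i) = i := Nat.sub_sub_self hi
  have := main (m - i) (Nat.sub_le m i) t ht
  rwa [Nat.sub_sub_self hi] at this
end

section
/- Let h : ℝ^{n} × ℝ^{m} → ℝ be continuously differentiable, and let (x(t), u(t)) solve ẋ = F(x,u) + ℓ(x)d(t), u̇ = φ(x,u) + v(t). If for all t, (∂h/∂x)(F + ℓ d̂) + (∂h/∂u)(φ + v) + γ(h) ≥ ‖(∂h/∂x)ℓ‖·C(t) where ‖d̂(t) - d(t)‖ ≤ C(t) and γ is class-K, then ḣ(t) + γ(h(t)) ≥ 0 along the trajectory, and hence if h(x(0),u(0)) ≥ 0 then h(x(t),u(t)) ≥ 0 for all t ≥ 0. -/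
theorem stmt_14 (n m p : ℕ)
    (h : EuclideanSpace ℝ (Fin n) × EuclideanSpace ℝ (Fin m) → ℝ)
    (hh : ContDiff ℝ 1 h)
    (Fdyn : EuclideanSpace ℝ (Fin n) → EuclideanSpace ℝ (Fin m) → EuclideanSpace ℝ (Fin n))
    (ℓ : EuclideanSpace ℝ (Fin n) → (EuclideanSpace ℝ (Fin p) →L[ℝ] EuclideanSpace ℝ (Fin n)))
    (φ : EuclideanSpace ℝ (Fin n) → EuclideanSpace ℝ (Fin m) → EuclideanSpace ℝ (Fin m))
    (d dhat : ℝ → EuclideanSpace ℝ (Fin p)) (v : ℝ → EuclideanSpace ℝ (Fin m))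
    (C : ℝ → ℝ) (γ : ℝ → ℝ)
    (hγcont : Continuous γ) (hγmono : StrictMono γ) (hγ0 : γ 0 = 0)
    (x : ℝ → EuclideanSpace ℝ (Fin n)) (u : ℝ → EuclideanSpace ℝ (Fin m))
    (hx : ∀ t, HasDerivAt x (Fdyn (x t) (u t) + ℓ (x t) (d t)) t)
    (hu : ∀ t, HasDerivAt u (φ (x t) (u t) + v t) t)
    (hxc : Continuous x) (huc : Continuous u) (hdc : Continuous d)
    (hvc : Continuous v)
    (hbound : ∀ t, ‖dhat t - d t‖ ≤ C t)
    (hmain : ∀ t,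
      fderiv ℝ h (x t, u t)
          (Fdyn (x t) (u t) + ℓ (x t) (dhat t), φ (x t) (u t) + v t)
        + γ (h (x t, u t))
      ≥ ‖(fderiv ℝ h (x t, u t)).comp
          ((ContinuousLinearMap.inl ℝ (EuclideanSpace ℝ (Fin n))
            (EuclideanSpace ℝ (Fin m))).comp (ℓ (x t)))‖ * C t) :
    (∀ t ≥ (0:ℝ), deriv (fun s => h (x s, u s)) t + γ (h (x t, u t)) ≥ 0) ∧
    (h (x 0, u 0) ≥ 0 → ∀ t ≥ (0:ℝ), h (x t, u t) ≥ 0) := by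
  set η : ℝ → ℝ := fun s => h (x s, u s) with hη
  have hderiv : ∀ t, HasDerivAt η
      (fderiv ℝ h (x t, u t)
        (Fdyn (x t) (u t) + ℓ (x t) (d t), φ (x t) (u t) + v t)) t := by
    intro t
    have hF : HasFDerivAt h (fderiv ℝ h (x t, u t)) (x t, u t) :=
      ((hh.differentiable one_ne_zero) (x t, u t)).hasFDerivAt
    have hp : HasDerivAt (fun s => (x s, u s))
        (Fdyn (x t) (u t) + ℓ (x t) (d t), φ (x t) (u t) + v t) t :=
      (hx t).prodMk (hu t)
    exact hF.comp_hasDerivAt t hp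
  have hkey : ∀ t, deriv η t + γ (η t) ≥ 0 := by
    intro t
    have hdη : deriv η t = fderiv ℝ h (x t, u t)
        (Fdyn (x t) (u t) + ℓ (x t) (d t), φ (x t) (u t) + v t) :=
      (hderiv t).deriv
    set D := fderiv ℝ h (x t, u t) with hD
    have hsplit : D (Fdyn (x t) (u t) + ℓ (x t) (d t), φ (x t) (u t) + v t)
        = D (Fdyn (x t) (u t) + ℓ (x t) (dhat t), φ (x t) (u t) + v t)
          - D (ℓ (x t) (dhat t - d t), 0) := by
      rw [← map_sub]
      congr 1
      refine Prod.ext ?_ ?_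
      · show Fdyn (x t) (u t) + ℓ (x t) (d t)
            = Fdyn (x t) (u t) + ℓ (x t) (dhat t) - ℓ (x t) (dhat t - d t)
        rw [map_sub]; abel
      · show φ (x t) (u t) + v t = φ (x t) (u t) + v t - 0
        simp
    have happ : D (ℓ (x t) (dhat t - d t), 0)
        = (D.comp ((ContinuousLinearMap.inl ℝ (EuclideanSpace ℝ (Fin n))
            (EuclideanSpace ℝ (Fin m))).comp (ℓ (x t)))) (dhat t - d t) := by
      simp
    have hCnonneg : (0:ℝ) ≤ C t := le_trans (norm_nonneg _) (hbound t)
    have hnorm : |D (ℓ (x t) (dhat t - d t), 0)|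
        ≤ ‖D.comp ((ContinuousLinearMap.inl ℝ (EuclideanSpace ℝ (Fin n))
            (EuclideanSpace ℝ (Fin m))).comp (ℓ (x t)))‖ * C t := by
      rw [happ]
      calc |_| ≤ ‖D.comp ((ContinuousLinearMap.inl ℝ (EuclideanSpace ℝ (Fin n))
            (EuclideanSpace ℝ (Fin m))).comp (ℓ (x t)))‖ * ‖dhat t - d t‖ :=
            (D.comp _).le_opNorm _
        _ ≤ _ := by
            exact mul_le_mul_of_nonneg_left (hbound t) (norm_nonneg _)
    have hm := hmain t
    rw [hdη, hsplit]
    have h1 : D (ℓ (x t) (dhat t - d t), 0)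
        ≤ ‖D.comp ((ContinuousLinearMap.inl ℝ (EuclideanSpace ℝ (Fin n))
            (EuclideanSpace ℝ (Fin m))).comp (ℓ (x t)))‖ * C t :=
      le_trans (le_abs_self _) hnorm
    linarith [hm]
  refine ⟨fun t _ => hkey t, ?_⟩
  intro h0 t ht
  by_contra hneg
  push_neg at hneg
  have hηc : Continuous η := hh.continuous.comp (hxc.prodMk huc)
  -- the set where η ≥ 0 within [0, t]
  set S : Set ℝ := {s | s ∈ Set.Icc 0 t ∧ η s ≥ 0} with hS
  have hS0 : (0:ℝ) ∈ S := ⟨⟨le_refl 0, ht⟩, h0⟩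
  have hSbdd : BddAbove S := ⟨t, fun s hs => hs.1.2⟩
  have hSne : S.Nonempty := ⟨0, hS0⟩
  set s₀ := sSup S with hs0
  have hs₀mem : s₀ ∈ S := by
    have hclosed : IsClosed S := by
      have : S = Set.Icc 0 t ∩ η ⁻¹' (Set.Ici 0) := by
        ext s; simp only [hS, Set.mem_setOf_eq, Set.mem_inter_iff, Set.mem_preimage, Set.mem_Ici, ge_iff_le]
      rw [this]
      exact isClosed_Icc.inter (isClosed_Ici.preimage hηc)
    exact hclosed.csSup_mem hSne hSbdd
  have hs₀le : s₀ ≤ t := hs₀mem.1.2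
  have hs₀lt : s₀ < t := lt_of_le_of_ne hs₀le (by
    intro he
    have := hs₀mem.2
    rw [he] at this
    exact absurd this (not_le.mpr hneg))
  have hlt : ∀ s, s₀ < s → s ≤ t → η s < 0 := by
    intro s hs1 hs2
    by_contra hge
    push_neg at hge
    have : s ∈ S := ⟨⟨le_trans hs₀mem.1.1 (le_of_lt hs1), hs2⟩, hge⟩
    exact absurd (le_csSup hSbdd this) (not_le.mpr hs1)
  -- MVT on [s₀, t]
  obtain ⟨c, hc, hcd⟩ := exists_hasDerivAt_eq_slope η (deriv η) hs₀lt
    (hηc.continuousOn) (fun s _ => by rw [(hderiv s).deriv]; exact hderiv s)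
  have hηc0 : η c < 0 := hlt c hc.1 (le_of_lt hc.2)
  have hγneg : γ (η c) < 0 := by
    have := hγmono hηc0
    rwa [hγ0] at this
  have hdpos : deriv η c > 0 := by
    have := hkey c
    linarith
  have : η t - η s₀ > 0 := by
    have hpos : (0:ℝ) < t - s₀ := by linarith
    have h2 : (0:ℝ) < (η t - η s₀) / (t - s₀) := by
      rw [← hcd]; exact hdpos
    have h3 := (div_pos_iff.mp h2)
    rcases h3 with ⟨a, _⟩ | ⟨_, b⟩
    · exact a
    · linarith
  have : η t > 0 := by linarith [hs₀mem.2]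
  linarith
end
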